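/- Lemma 2.2, second inequality: Let α, β ∈ ℕ³ be multi-indices and set θ := max(|α|, |β|). There exists a constant C, depending only on α and β, such that for every ℤ³-periodic smooth divergence-free mean-zero field ξ and every ℤ³-periodic smooth field f: (⟨D^α(B_ξ f), D^β f⟩_{L²} + ⟨D^β(B_ξ f), D^α f⟩_{L²})² ≤ C ‖ξ‖_{W^{θ+1,∞}}² ‖f‖_{W^{θ,2}}⁴. -/

import Mathlib

open MeasureTheory

noncomputable section

/-- Points of ℝ³ (as `Fin 3 → ℝ`). -/
abbrev V3 := Fin 3 → ℝ
/-- Vector fields on ℝ³. -/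
abbrev VF := V3 → V3

/-- Smoothness of a vector field. -/
def SmoothVF (f : VF) : Prop := ContDiff ℝ (⊤ : ℕ∞) f

/-- Smoothness of a scalar function. -/
def SmoothS (p : V3 → ℝ) : Prop := ContDiff ℝ (⊤ : ℕ∞) p

/-- The periodicity cell [0,1)³. -/
def cube : Set V3 := Set.univ.pi fun _ => Set.Ico (0:ℝ) 1

/-- Partial derivative in the j-th coordinate, acting componentwise. -/
def pd (j : Fin 3) (f : VF) : VF := fun x => fderiv ℝ f x (Pi.single j 1)

/-- Iterated derivative D^α = ∂₁^{α₁}∂₂^{α₂}∂₃^{α₃} for a multi-index α = (α₁, α₂, α₃). -/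
def Dm (α : ℕ × ℕ × ℕ) (f : VF) : VF :=
  (pd 0)^[α.1] ((pd 1)^[α.2.1] ((pd 2)^[α.2.2] f))

/-- The order |α| of a multi-index. -/
def mdeg (α : ℕ × ℕ × ℕ) : ℕ := α.1 + α.2.1 + α.2.2

/-- ℤ³-periodicity of a vector field. -/
def Periodic3 (f : VF) : Prop :=
  ∀ (x : V3) (k : Fin 3 → ℤ), f (x + fun i => (k i : ℝ)) = f x

/-- ℤ³-periodicity of a scalar function. -/
def PeriodicS (p : V3 → ℝ) : Prop :=
  ∀ (x : V3) (k : Fin 3 → ℤ), p (x + fun i => (k i : ℝ)) = p x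

/-- Divergence-free: Σ_j ∂_j f^j ≡ 0. -/
def DivFree (f : VF) : Prop := ∀ x, ∑ j, pd j f x j = 0

/-- Mean-zero over the periodicity cell. -/
def MeanZero (f : VF) : Prop := (∫ x in cube, f x) = 0

/-- The L² inner product over the periodicity cell. -/
def L2inner (f g : VF) : ℝ := ∫ x in cube, ∑ i, f x i * g x i

/-- The finite set of multi-indices of order at most m. -/
def midx (m : ℕ) : Finset (ℕ × ℕ × ℕ) :=
  (Finset.range (m+1) ×ˢ Finset.range (m+1) ×ˢ Finset.range (m+1)).filter
    fun α => mdeg α ≤ m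

lemma midx_nonempty (m : ℕ) : (midx m).Nonempty :=
  ⟨(0,0,0), by
    unfold midx
    exact Finset.mem_filter.mpr ⟨Finset.mem_product.mpr ⟨by simp,
      Finset.mem_product.mpr ⟨by simp, by simp⟩⟩, by simp [mdeg]⟩⟩

/-- The W^{m,2} inner product ⟨f,g⟩_{W^{m,2}} = Σ_{|α|≤m} ⟨D^α f, D^α g⟩_{L²}. -/
def sobInner (m : ℕ) (f g : VF) : ℝ := ∑ α ∈ midx m, L2inner (Dm α f) (Dm α g)

/-- The squared W^{m,2} norm. -/
def sobNormSq (m : ℕ) (f : VF) : ℝ := sobInner m f f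

/-- The W^{k,∞} norm: max over |α| ≤ k of sup_x |D^α ξ(x)|. -/
def WinfNorm (k : ℕ) (ξ : VF) : ℝ :=
  (midx k).sup' (midx_nonempty k) fun α => ⨆ x, ‖Dm α ξ x‖

/-- The transport operator 𝓛_ξ f = Σ_j ξ^j ∂_j f. -/
def transport (ξ f : VF) : VF := fun x => ∑ j, ξ x j • pd j f x

/-- The stretching operator 𝓣_ξ f, with l-th component Σ_j f^j ∂_l ξ^j. -/
def stretch (ξ f : VF) : VF := fun x l => ∑ j, f x j * pd l ξ x j

/-- The L²-adjoint 𝓣*_ξ g, with j-th component Σ_l g^l ∂_l ξ^j. -/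
def stretchStar (ξ g : VF) : VF := fun x j => ∑ l, g x l * pd l ξ x j

/-- The transport–stretching operator B_ξ = 𝓛_ξ + 𝓣_ξ. -/
def Bop (ξ f : VF) : VF := fun x => transport ξ f x + stretch ξ f x

/-- The gradient of a scalar function. -/
def grad (p : V3 → ℝ) : VF := fun x i => fderiv ℝ p x (Pi.single i 1)

/-- `IsLeray u g` : g is the Leray projection 𝒫u of u, i.e. g is a ℤ³-periodic smooth
divergence-free mean-zero field and u − g = ∇p + c for some ℤ³-periodic smooth scalar p
and constant vector c. -/
def IsLeray (u g : VF) : Prop :=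
  Periodic3 g ∧ SmoothVF g ∧ DivFree g ∧ MeanZero g ∧
  ∃ (p : V3 → ℝ) (c : V3), PeriodicS p ∧ SmoothS p ∧
    ∀ x, u x - g x = grad p x + c

/-- The componentwise Laplacian. -/
def lap (f : VF) : VF := fun x => ∑ j, pd j (pd j f) x

/-- The Stokes inner product ⟨u,v⟩_{A^{m/2}}. -/
def stokesInner (m : ℕ) (u v : VF) : ℝ :=
  if m % 2 = 0 then L2inner (lap^[m/2] u) (lap^[m/2] v)
  else ∑ j : Fin 3, L2inner (pd j (lap^[m/2] u)) (pd j (lap^[m/2] v))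

/-- A ℤ³-periodic smooth divergence-free mean-zero vector field. -/
def GoodField (f : VF) : Prop :=
  Periodic3 f ∧ SmoothVF f ∧ DivFree f ∧ MeanZero f

namespace Stmt9

def pdS (j : Fin 3) (g : V3 → ℝ) : V3 → ℝ := fun x => fderiv ℝ g x (Pi.single j 1)

structure Nice (g : V3 → ℝ) : Prop where
  smooth : ContDiff ℝ (⊤ : ℕ∞) g
  per : ∀ (x : V3) (k : Fin 3 → ℤ), g (x + fun i => (k i : ℝ)) = g x

lemma h1top : ((⊤:ℕ∞) : WithTop ℕ∞) ≠ 0 := by simp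
lemma htop1 : ((⊤:ℕ∞) : WithTop ℕ∞) + 1 ≤ ((⊤:ℕ∞) : WithTop ℕ∞) := by exact_mod_cast le_top

lemma Nice.diffAt {g} (hg : Nice g) (x : V3) : DifferentiableAt ℝ g x :=
  (hg.smooth.differentiable h1top).differentiableAt

lemma Nice.cont {g} (hg : Nice g) : Continuous g := hg.smooth.continuous

lemma pdS_smooth {g} (hg : ContDiff ℝ (⊤ : ℕ∞) g) (j : Fin 3) :
    ContDiff ℝ (⊤ : ℕ∞) (pdS j g) := by
  have hcd := (ContinuousLinearMap.apply ℝ ℝ (Pi.single j (1:ℝ))).contDiff.comp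
    (hg.fderiv_right htop1)
  have he : pdS j g = ⇑(ContinuousLinearMap.apply ℝ ℝ (Pi.single j (1:ℝ))) ∘ fderiv ℝ g := rfl
  rw [he]; exact hcd

lemma Nice.pd {g} (hg : Nice g) (j : Fin 3) : Nice (pdS j g) := by
  refine ⟨pdS_smooth hg.smooth j, ?_⟩
  intro x k
  set c : V3 := fun i => (k i : ℝ)
  have h1 : (fun y : V3 => g (y + c)) = g := funext fun y => hg.per y k
  have hd : HasFDerivAt (fun y : V3 => g (y + c)) (fderiv ℝ g (x + c)) x := by
    have := (hg.diffAt (x + c)).hasFDerivAt.comp x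
      ((hasFDerivAt_id x).add_const c)
    exact this
  rw [h1] at hd
  simp only [pdS]
  rw [hd.fderiv]

lemma Nice.add {g h} (hg : Nice g) (hh : Nice h) : Nice (fun x => g x + h x) :=
  ⟨hg.smooth.add hh.smooth, fun x k => by simp [hg.per x k, hh.per x k]⟩

lemma Nice.mul {g h} (hg : Nice g) (hh : Nice h) : Nice (fun x => g x * h x) :=
  ⟨hg.smooth.mul hh.smooth, fun x k => by simp [hg.per x k, hh.per x k]⟩

lemma Nice.const_mul {g} (hg : Nice g) (c : ℝ) : Nice (fun x => c * g x) :=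
  ⟨contDiff_const.mul hg.smooth, fun x k => by simp [hg.per x k]⟩

lemma Nice.sum {ι : Type*} (s : Finset ι) (g : ι → V3 → ℝ) (hg : ∀ i ∈ s, Nice (g i)) :
    Nice (fun x => ∑ i ∈ s, g i x) := by
  classical
  induction s using Finset.induction with
  | empty => exact ⟨contDiff_const, fun x k => by simp⟩
  | insert a s hni ih =>
    simp only [Finset.sum_insert hni]
    exact (hg a (by simp)).add (ih fun i hi => hg i (Finset.mem_insert_of_mem hi))

lemma pdS_add {g h} (hg : Nice g) (hh : Nice h) :
    pdS j (fun x => g x + h x) = fun x => pdS j g x + pdS j h x := by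
  funext x
  simp only [pdS]
  rw [fderiv_fun_add (hg.diffAt x) (hh.diffAt x)]
  simp

lemma pdS_mul {j : Fin 3} {g h} (hg : Nice g) (hh : Nice h) :
    pdS j (fun x => g x * h x) = fun x => pdS j g x * h x + g x * pdS j h x := by
  funext x
  simp only [pdS]
  rw [fderiv_fun_mul (hg.diffAt x) (hh.diffAt x)]
  simp only [ContinuousLinearMap.add_apply, ContinuousLinearMap.smul_apply, smul_eq_mul]
  ring

lemma pdS_const_mul {j : Fin 3} {g} (hg : Nice g) (c : ℝ) :
    pdS j (fun x => c * g x) = fun x => c * pdS j g x := by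
  funext x
  simp only [pdS]
  rw [fderiv_const_mul (hg.diffAt x) c]
  simp

lemma pdS_sum {ι : Type*} {j : Fin 3} (s : Finset ι) (g : ι → V3 → ℝ)
    (hg : ∀ i ∈ s, Nice (g i)) :
    pdS j (fun x => ∑ i ∈ s, g i x) = fun x => ∑ i ∈ s, pdS j (g i) x := by
  classical
  induction s using Finset.induction with
  | empty => funext x; simp [pdS]
  | insert a s hni ih =>
    simp only [Finset.sum_insert hni]
    rw [pdS_add (hg a (by simp)) (Nice.sum s g fun i hi => hg i (Finset.mem_insert_of_mem hi)),
      ih fun i hi => hg i (Finset.mem_insert_of_mem hi)]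

-- commutation of partials
lemma pdS_comm {g} (hg : Nice g) (j l : Fin 3) :
    pdS j (pdS l g) = pdS l (pdS j g) := by
  funext x
  have hdiff : ∀ y, HasFDerivAt g (fderiv ℝ g y) y := fun y => (hg.diffAt y).hasFDerivAt
  have h2 : HasFDerivAt (fderiv ℝ g) (fderiv ℝ (fderiv ℝ g) x) x := by
    refine (DifferentiableAt.hasFDerivAt ?_)
    exact ((hg.smooth.fderiv_right htop1).differentiable h1top).differentiableAt
  have hsym := second_derivative_symmetric (f := g) (fun y => hdiff y) h2
    (Pi.single j 1) (Pi.single l 1)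
  have key : ∀ (a b : Fin 3), pdS a (pdS b g) x =
      fderiv ℝ (fderiv ℝ g) x (Pi.single a 1) (Pi.single b 1) := by
    intro a b
    have h0 : pdS a (pdS b g) x = fderiv ℝ
        (⇑(ContinuousLinearMap.apply ℝ ℝ (Pi.single b (1:ℝ))) ∘ (fderiv ℝ g)) x (Pi.single a 1) := rfl
    rw [h0]
    have hF : DifferentiableAt ℝ (fderiv ℝ g) x :=
      ((hg.smooth.fderiv_right htop1).differentiable h1top).differentiableAt
    have hcomp := (ContinuousLinearMap.apply ℝ ℝ (Pi.single b (1:ℝ))).hasFDerivAt.comp x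
      hF.hasFDerivAt
    rw [hcomp.fderiv]
    simp
  rw [key j l, key l j, hsym]

end Stmt9
namespace Stmt9

def DmS (α : ℕ × ℕ × ℕ) (g : V3 → ℝ) : V3 → ℝ :=
  (pdS 0)^[α.1] ((pdS 1)^[α.2.1] ((pdS 2)^[α.2.2] g))

lemma Nice.iter {g} (hg : Nice g) (j : Fin 3) (n : ℕ) : Nice ((pdS j)^[n] g) := by
  induction n with
  | zero => exact hg
  | succ n ih => rw [Function.iterate_succ_apply']; exact ih.pd j

lemma Nice.dm {g} (hg : Nice g) (α : ℕ × ℕ × ℕ) : Nice (DmS α g) :=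
  (((hg.iter 2 α.2.2).iter 1 α.2.1).iter 0 α.1)

lemma pdS_comm_iter {g} (hg : Nice g) (j l : Fin 3) (n : ℕ) :
    pdS j ((pdS l)^[n] g) = (pdS l)^[n] (pdS j g) := by
  induction n with
  | zero => rfl
  | succ n ih =>
    rw [Function.iterate_succ_apply', pdS_comm (hg.iter l n) j l, ih]
    exact (Function.iterate_succ_apply' (pdS l) n (pdS j g)).symm

lemma pdS_comm_dm {g} (hg : Nice g) (j : Fin 3) (α : ℕ × ℕ × ℕ) :
    pdS j (DmS α g) = DmS α (pdS j g) := by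
  unfold DmS
  rw [pdS_comm_iter ((hg.iter 2 α.2.2).iter 1 α.2.1) j 0 α.1,
    pdS_comm_iter (hg.iter 2 α.2.2) j 1 α.2.1,
    pdS_comm_iter hg j 2 α.2.2]

/-- multi-index sum with unit vector -/
def eadd (α : ℕ × ℕ × ℕ) (j : Fin 3) : ℕ × ℕ × ℕ :=
  if j = 0 then (α.1 + 1, α.2.1, α.2.2)
  else if j = 1 then (α.1, α.2.1 + 1, α.2.2) else (α.1, α.2.1, α.2.2 + 1)

lemma mdeg_eadd (α : ℕ × ℕ × ℕ) (j : Fin 3) : mdeg (eadd α j) = mdeg α + 1 := by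
  fin_cases j <;> simp [eadd, mdeg] <;> omega

lemma DmS_pdS {g} (hg : Nice g) (j : Fin 3) (α : ℕ × ℕ × ℕ) :
    DmS α (pdS j g) = DmS (eadd α j) g := by
  fin_cases j
  · show DmS α (pdS 0 g) = DmS (α.1+1, α.2.1, α.2.2) g
    unfold DmS
    simp only
    rw [Function.iterate_succ_apply, pdS_comm_iter (hg.iter 2 α.2.2) 0 1 α.2.1,
      pdS_comm_iter hg 0 2 α.2.2]
  · show DmS α (pdS 1 g) = DmS (α.1, α.2.1+1, α.2.2) g
    unfold DmS
    simp only
    rw [Function.iterate_succ_apply, pdS_comm_iter hg 1 2 α.2.2]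
  · show DmS α (pdS 2 g) = DmS (α.1, α.2.1, α.2.2+1) g
    unfold DmS
    simp only
    rw [Function.iterate_succ_apply]

lemma iter_add {j : Fin 3} {g h} (hg : Nice g) (hh : Nice h) (n : ℕ) :
    (pdS j)^[n] (fun x => g x + h x) = fun x => (pdS j)^[n] g x + (pdS j)^[n] h x := by
  induction n with
  | zero => rfl
  | succ n ih =>
    rw [Function.iterate_succ_apply', ih, pdS_add (hg.iter j n) (hh.iter j n),
      Function.iterate_succ_apply' (pdS j) n g, Function.iterate_succ_apply' (pdS j) n h]

lemma DmS_add {g h} (hg : Nice g) (hh : Nice h) (α : ℕ × ℕ × ℕ) :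
    DmS α (fun x => g x + h x) = fun x => DmS α g x + DmS α h x := by
  unfold DmS
  rw [iter_add hg hh, iter_add (hg.iter 2 _) (hh.iter 2 _),
    iter_add ((hg.iter 2 _).iter 1 _) ((hh.iter 2 _).iter 1 _)]

lemma iter_const_mul {j : Fin 3} {g} (hg : Nice g) (c : ℝ) (n : ℕ) :
    (pdS j)^[n] (fun x => c * g x) = fun x => c * (pdS j)^[n] g x := by
  induction n with
  | zero => rfl
  | succ n ih =>
    rw [Function.iterate_succ_apply', ih, pdS_const_mul (hg.iter j n),
      Function.iterate_succ_apply' (pdS j) n g]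

lemma DmS_const_mul {g} (hg : Nice g) (c : ℝ) (α : ℕ × ℕ × ℕ) :
    DmS α (fun x => c * g x) = fun x => c * DmS α g x := by
  unfold DmS
  rw [iter_const_mul hg, iter_const_mul (hg.iter 2 _), iter_const_mul ((hg.iter 2 _).iter 1 _)]

lemma iter_sum {ι : Type*} {j : Fin 3} (s : Finset ι) (g : ι → V3 → ℝ)
    (hg : ∀ i ∈ s, Nice (g i)) (n : ℕ) :
    (pdS j)^[n] (fun x => ∑ i ∈ s, g i x) = fun x => ∑ i ∈ s, (pdS j)^[n] (g i) x := by
  induction n with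
  | zero => rfl
  | succ n ih =>
    rw [Function.iterate_succ_apply', ih, pdS_sum s _ (fun i hi => (hg i hi).iter j n)]
    funext x
    congr 1
    ext i
    rw [Function.iterate_succ_apply' (pdS j) n (g i)]

lemma DmS_sum {ι : Type*} (s : Finset ι) (g : ι → V3 → ℝ)
    (hg : ∀ i ∈ s, Nice (g i)) (α : ℕ × ℕ × ℕ) :
    DmS α (fun x => ∑ i ∈ s, g i x) = fun x => ∑ i ∈ s, DmS α (g i) x := by
  unfold DmS
  rw [iter_sum s _ hg, iter_sum s _ (fun i hi => (hg i hi).iter 2 _),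
    iter_sum s _ (fun i hi => ((hg i hi).iter 2 _).iter 1 _)]

/-- 1-D Leibniz rule for iterated partials. -/
lemma leibniz1 {j : Fin 3} {g h} (hg : Nice g) (hh : Nice h) (n : ℕ) :
    (pdS j)^[n] (fun x => g x * h x) =
      fun x => ∑ k ∈ Finset.range (n+1),
        (n.choose k : ℝ) * ((pdS j)^[k] g x * (pdS j)^[n-k] h x) := by
  induction n with
  | zero => funext x; simp
  | succ n ih =>
    rw [Function.iterate_succ_apply', ih,
      pdS_sum _ _ (fun k _ => (((hg.iter j k).mul (hh.iter j (n-k))).const_mul _))]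
    funext x
    set u : ℕ → ℝ := fun k => (pdS j)^[k] g x with hu
    set v : ℕ → ℝ := fun k => (pdS j)^[k] h x with hv
    have hterm : ∀ k ∈ Finset.range (n+1),
        pdS j (fun y => (n.choose k : ℝ) * ((pdS j)^[k] g y * (pdS j)^[n-k] h y)) x
        = (n.choose k : ℝ) * (u (k+1) * v (n-k))
          + (n.choose k : ℝ) * (u k * v (n-k+1)) := by
      intro k _
      simp only [hu, hv]
      rw [pdS_const_mul ((hg.iter j k).mul (hh.iter j (n-k))),
        pdS_mul (hg.iter j k) (hh.iter j (n-k))]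
      rw [← Function.iterate_succ_apply' (pdS j) k g,
        ← Function.iterate_succ_apply' (pdS j) (n-k) h]
      ring
    rw [Finset.sum_congr rfl hterm, Finset.sum_add_distrib]
    have hA : ∑ k ∈ Finset.range (n+1), (n.choose k : ℝ) * (u (k+1) * v (n-k))
        = ∑ k ∈ Finset.range (n+1), (n.choose k : ℝ) * (u (k+1) * v (n+1-(k+1))) := by
      refine Finset.sum_congr rfl (fun k _ => ?_)
      have : n + 1 - (k+1) = n - k := by omega
      rw [this]
    have hB : ∑ k ∈ Finset.range (n+1), (n.choose k : ℝ) * (u k * v (n-k+1))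
        = ∑ k ∈ Finset.range (n+1), (n.choose (k+1) : ℝ) * (u (k+1) * v (n+1-(k+1)))
          + (1:ℝ) * (u 0 * v (n+1)) := by
      rw [Finset.sum_range_succ' (fun k => (n.choose k : ℝ) * (u k * v (n-k+1))) n]
      simp only [Nat.choose_zero_right, Nat.cast_one, Nat.sub_zero]
      congr 1
      rw [Finset.sum_range_succ]
      simp only [Nat.choose_succ_self, Nat.cast_zero, zero_mul, add_zero]
      refine Finset.sum_congr rfl (fun k hk => ?_)
      have hk' := Finset.mem_range.1 hk
      have : n - (k+1) + 1 = n + 1 - (k+1) := by omega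
      rw [this]
    rw [hA, hB, ← add_assoc, ← Finset.sum_add_distrib]
    rw [Finset.sum_range_succ' (fun k => ((n+1).choose k : ℝ) * (u k * v (n+1-k))) (n+1)]
    simp only [Nat.choose_zero_right, Nat.cast_one, Nat.sub_zero]
    congr 1
    refine Finset.sum_congr rfl (fun k _ => ?_)
    rw [Nat.choose_succ_succ (n) (k)]
    push_cast
    ring

end Stmt9
namespace Stmt9

def mbox (α : ℕ × ℕ × ℕ) : Finset (ℕ × ℕ × ℕ) :=
  Finset.range (α.1+1) ×ˢ Finset.range (α.2.1+1) ×ˢ Finset.range (α.2.2+1)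

def coef (α δ : ℕ × ℕ × ℕ) : ℝ :=
  (α.1.choose δ.1 : ℝ) * (α.2.1.choose δ.2.1 : ℝ) * (α.2.2.choose δ.2.2 : ℝ)

def msub (α δ : ℕ × ℕ × ℕ) : ℕ × ℕ × ℕ := (α.1 - δ.1, α.2.1 - δ.2.1, α.2.2 - δ.2.2)

lemma mem_mbox {α δ : ℕ × ℕ × ℕ} :
    δ ∈ mbox α ↔ δ.1 ≤ α.1 ∧ δ.2.1 ≤ α.2.1 ∧ δ.2.2 ≤ α.2.2 := by
  simp [mbox, Nat.lt_succ_iff]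

lemma coef_nonneg (α δ : ℕ × ℕ × ℕ) : 0 ≤ coef α δ := by
  unfold coef; positivity

lemma step_iter {j : Fin 3} {g h} (hg : Nice g) (hh : Nice h) (c : ℝ) (n : ℕ) :
    (pdS j)^[n] (fun x => c * (g x * h x)) =
      fun x => ∑ k ∈ Finset.range (n+1), c * (n.choose k : ℝ) *
        ((pdS j)^[k] g x * (pdS j)^[n-k] h x) := by
  rw [show (fun x => c * (g x * h x)) = (fun x => c * (fun y => g y * h y) x) from rfl,
    iter_const_mul (hg.mul hh) c n, leibniz1 hg hh n]
  funext x
  rw [Finset.mul_sum]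
  exact Finset.sum_congr rfl fun k _ => by ring

lemma iter_sum_prod {ι : Type*} (s : Finset ι) (K : ι → ℝ) (G H : ι → V3 → ℝ)
    (hG : ∀ i ∈ s, Nice (G i)) (hH : ∀ i ∈ s, Nice (H i)) (j : Fin 3) (n : ℕ) :
    (pdS j)^[n] (fun x => ∑ i ∈ s, K i * (G i x * H i x)) =
      fun x => ∑ i ∈ s, ∑ k ∈ Finset.range (n+1), K i * (n.choose k : ℝ) *
        ((pdS j)^[k] (G i) x * (pdS j)^[n-k] (H i) x) := by
  classical
  rw [iter_sum s _ (fun i hi => ((hG i hi).mul (hH i hi)).const_mul (K i))]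
  funext x
  refine Finset.sum_congr rfl fun i hi => ?_
  rw [step_iter (hG i hi) (hH i hi) (K i) n]

lemma leibniz3 {g h} (hg : Nice g) (hh : Nice h) (α : ℕ × ℕ × ℕ) :
    DmS α (fun x => g x * h x) = fun x => ∑ δ ∈ mbox α,
      coef α δ * (DmS δ g x * DmS (msub α δ) h x) := by
  obtain ⟨a, b, c⟩ := α
  show (pdS 0)^[a] ((pdS 1)^[b] ((pdS 2)^[c] (fun x => g x * h x))) = _
  have h2 : (pdS 2)^[c] (fun x => g x * h x) =
      fun x => ∑ r ∈ Finset.range (c+1), (c.choose r : ℝ) *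
        ((pdS 2)^[r] g x * (pdS 2)^[c-r] h x) := by
    rw [leibniz1 hg hh c]
  rw [h2, iter_sum_prod _ _ _ _ (fun r _ => hg.iter 2 r) (fun r _ => hh.iter 2 (c-r)) 1 b]
  have hflat : (fun x => ∑ r ∈ Finset.range (c+1), ∑ q ∈ Finset.range (b+1),
      (c.choose r : ℝ) * (b.choose q : ℝ) *
        ((pdS 1)^[q] ((pdS 2)^[r] g) x * (pdS 1)^[b-q] ((pdS 2)^[c-r] h) x)) =
      fun x => ∑ z ∈ Finset.range (c+1) ×ˢ Finset.range (b+1),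
        ((c.choose z.1 : ℝ) * (b.choose z.2 : ℝ)) *
          ((pdS 1)^[z.2] ((pdS 2)^[z.1] g) x * (pdS 1)^[b-z.2] ((pdS 2)^[c-z.1] h) x) := by
    funext x
    rw [Finset.sum_product]
  rw [hflat, iter_sum_prod _ _ _ _
    (fun z _ => (hg.iter 2 z.1).iter 1 z.2) (fun z _ => (hh.iter 2 (c-z.1)).iter 1 (b-z.2)) 0 a]
  funext x
  rw [show mbox (a,b,c) = Finset.range (a+1) ×ˢ Finset.range (b+1) ×ˢ Finset.range (c+1) from rfl]
  simp only [Finset.sum_product]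
  refine Eq.trans (Finset.sum_congr rfl fun r _ => Finset.sum_comm) ?_
  refine Eq.trans Finset.sum_comm ?_
  refine Finset.sum_congr rfl fun p _ => ?_
  refine Eq.trans Finset.sum_comm ?_
  refine Finset.sum_congr rfl fun q _ => Finset.sum_congr rfl fun r _ => ?_
  simp only [coef, DmS, msub]
  push_cast
  ring

end Stmt9
namespace Stmt9

def cube2 : Set (Fin 2 → ℝ) := Set.univ.pi fun _ => Set.Ico (0:ℝ) 1

lemma measurableSet_cube : MeasurableSet cube :=
  MeasurableSet.univ_pi fun _ => measurableSet_Ico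

lemma cube_subset_Icc : cube ⊆ Set.univ.pi fun _ : Fin 3 => Set.Icc (0:ℝ) 1 :=
  Set.pi_mono fun _ _ => Set.Ico_subset_Icc_self

lemma integrableOn_cube {u : V3 → ℝ} (hu : Continuous u) : IntegrableOn u cube := by
  refine (hu.continuousOn.integrableOn_compact
    (isCompact_univ_pi fun _ => isCompact_Icc)).mono_set cube_subset_Icc

lemma Nice.bounded {g} (hg : Nice g) : ∃ M, ∀ x, |g x| ≤ M := by
  obtain ⟨z, hz, hmax⟩ := (isCompact_univ_pi fun _ : Fin 3 =>
      isCompact_Icc (a := (0:ℝ)) (b := 1)).exists_isMaxOn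
    ⟨(0 : V3), fun i _ => ⟨le_refl (0:ℝ), zero_le_one⟩⟩ (continuous_abs.comp hg.cont).continuousOn
  refine ⟨|g z|, fun x => ?_⟩
  set y : V3 := fun i => Int.fract (x i) with hy
  have hxy : (y + fun i => ((⌊x i⌋ : ℤ) : ℝ)) = x := by
    funext i
    simp only [hy, Pi.add_apply]
    exact Int.fract_add_floor (x i)
  have hgx : g x = g y := by
    conv_lhs => rw [← hxy]
    exact hg.per y fun i => ⌊x i⌋
  rw [hgx]
  refine hmax ?_
  intro i _
  exact ⟨Int.fract_nonneg _, le_of_lt (Int.fract_lt_one _)⟩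

lemma integral_pdS_zero {g} (hg : Nice g) (j : Fin 3) :
    ∫ x in cube, pdS j g x = 0 := by
  classical
  set e := MeasurableEquiv.piFinSuccAbove (fun _ : Fin 3 => ℝ) j with he
  have hmp : MeasurePreserving e volume volume :=
    volume_preserving_piFinSuccAbove (fun _ : Fin 3 => ℝ) j
  set s : Set (ℝ × (Fin 2 → ℝ)) := Set.Ico (0:ℝ) 1 ×ˢ cube2 with hs
  have hesymm : ∀ z : ℝ × (Fin 2 → ℝ), e.symm z = j.insertNth z.1 z.2 := fun z => rfl
  have hpath : ∀ (y : Fin 2 → ℝ) (t : ℝ),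
      e.symm (t, y) = e.symm (0, y) + t • (Pi.single j 1 : V3) := by
    intro y t
    funext i
    rw [hesymm (t, y), hesymm (0, y)]
    rcases eq_or_ne i j with rfl | hi
    · simp only [Pi.add_apply, Pi.smul_apply, Fin.insertNth_apply_same, Pi.single_eq_same,
        smul_eq_mul, mul_one, zero_add]
    · obtain ⟨k, hk⟩ := Fin.exists_succAbove_eq hi
      rw [← hk]
      simp only [Pi.add_apply, Pi.smul_apply, Fin.insertNth_apply_succAbove,
        Pi.single_eq_of_ne (Fin.succAbove_ne j k), smul_eq_mul, mul_zero, add_zero]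
  have hsymm_cont : Continuous (fun z : ℝ × (Fin 2 → ℝ) => e.symm z) := by
    refine continuous_pi fun i => ?_
    rcases eq_or_ne i j with rfl | hi
    · have : (fun z : ℝ × (Fin 2 → ℝ) => e.symm z i) = fun z => z.1 := by
        funext z
        rw [hesymm]
        simp only [Fin.insertNth_apply_same]
      rw [this]; exact continuous_fst
    · obtain ⟨k, hk⟩ := Fin.exists_succAbove_eq hi
      subst hk
      have : (fun z : ℝ × (Fin 2 → ℝ) => e.symm z (j.succAbove k)) = fun z => z.2 k := by
        funext z
        rw [hesymm]
        simp only [Fin.insertNth_apply_succAbove]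
      rw [this]; exact (continuous_apply k).comp continuous_snd
  have hcube : cube = e ⁻¹' s := by
    ext x
    simp only [Set.mem_preimage, hs, Set.mem_prod, cube, cube2, Set.mem_pi, Set.mem_univ,
      forall_true_left]
    rw [show e x = (x j, fun k => x (j.succAbove k)) from rfl]
    constructor
    · intro h
      exact ⟨h j, fun k => h _⟩
    · rintro ⟨h1, h2⟩ i
      rcases eq_or_ne i j with rfl | hi
      · exact h1
      · obtain ⟨k, hk⟩ := Fin.exists_succAbove_eq hi
        subst hk
        exact h2 k
  have hFcont : Continuous (fun z : ℝ × (Fin 2 → ℝ) => pdS j g (e.symm z)) :=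
    (hg.pd j).cont.comp hsymm_cont
  have hsint : IntegrableOn (fun z : ℝ × (Fin 2 → ℝ) => pdS j g (e.symm z)) s := by
    have hK : IsCompact (Set.Icc (0:ℝ) 1 ×ˢ Set.univ.pi fun _ : Fin 2 => Set.Icc (0:ℝ) 1) :=
      (isCompact_Icc (a := (0:ℝ)) (b := 1)).prod (isCompact_univ_pi fun _ => isCompact_Icc)
    have hIc : IntegrableOn (fun z : ℝ × (Fin 2 → ℝ) => pdS j g (e.symm z))
        (Set.Icc (0:ℝ) 1 ×ˢ Set.univ.pi fun _ : Fin 2 => Set.Icc (0:ℝ) 1) volume :=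
      hFcont.continuousOn.integrableOn_compact hK
    refine hIc.mono_set ?_
    rw [hs]
    exact Set.prod_mono Set.Ico_subset_Icc_self (Set.pi_mono fun _ _ => Set.Ico_subset_Icc_self)
  have h1 : ∫ x in cube, pdS j g x = ∫ z in s, pdS j g (e.symm z) := by
    rw [hcube, ← hmp.setIntegral_preimage_emb e.measurableEmbedding
      (fun z => pdS j g (e.symm z)) s]
    refine setIntegral_congr_fun (measurableSet_preimage e.measurable (by
      exact measurableSet_Ico.prod (MeasurableSet.univ_pi fun _ => measurableSet_Ico))) ?_
    intro x _
    simp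
  rw [h1]
  have hmeq : (volume : Measure (ℝ × (Fin 2 → ℝ))).restrict s
      = (volume.restrict (Set.Ico (0:ℝ) 1)).prod (volume.restrict cube2) := by
    rw [hs, Measure.volume_eq_prod]
    exact (Measure.prod_restrict _ _).symm
  have h2 : ∫ z in s, pdS j g (e.symm z)
      = ∫ y in cube2, ∫ t in Set.Ico (0:ℝ) 1, pdS j g (e.symm (t, y)) := by
    rw [show (∫ z in s, pdS j g (e.symm z))
      = ∫ z, pdS j g (e.symm z) ∂((volume : Measure (ℝ × (Fin 2 → ℝ))).restrict s) from rfl,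
      hmeq]
    refine MeasureTheory.integral_prod_symm _ ?_
    have : Integrable (fun z : ℝ × (Fin 2 → ℝ) => pdS j g (e.symm z))
        ((volume : Measure (ℝ × (Fin 2 → ℝ))).restrict s) := hsint
    rwa [hmeq] at this
  rw [h2]
  have hinner : ∀ y : Fin 2 → ℝ, ∫ t in Set.Ico (0:ℝ) 1, pdS j g (e.symm (t, y)) = 0 := by
    intro y
    have hIco : ∫ t in Set.Ico (0:ℝ) 1, pdS j g (e.symm (t, y))
        = ∫ t in (0:ℝ)..1, pdS j g (e.symm (t, y)) := by
      rw [intervalIntegral.integral_of_le (by norm_num : (0:ℝ) ≤ 1)]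
      rw [integral_Ico_eq_integral_Ioo, ← integral_Ioc_eq_integral_Ioo]
    rw [hIco]
    have hderiv : ∀ t ∈ Set.uIcc (0:ℝ) 1,
        HasDerivAt (fun t => g (e.symm (t, y))) (pdS j g (e.symm (t, y))) t := by
      intro t _
      have hp : HasDerivAt (fun t : ℝ => e.symm (t, y)) (Pi.single j 1 : V3) t := by
        rw [show (fun t : ℝ => e.symm (t, y))
          = fun t : ℝ => e.symm (0, y) + t • (Pi.single j 1 : V3) from funext (hpath y)]
        simpa using ((hasDerivAt_id t).smul_const (Pi.single j 1 : V3)).const_add (e.symm (0, y))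
      have := (hg.diffAt (e.symm (t, y))).hasFDerivAt.comp_hasDerivAt t hp
      exact this
    have hii : IntervalIntegrable (fun t => pdS j g (e.symm (t, y))) volume 0 1 := by
      refine Continuous.intervalIntegrable ?_ 0 1
      exact hFcont.comp (continuous_id.prodMk continuous_const)
    rw [intervalIntegral.integral_eq_sub_of_hasDerivAt hderiv hii]
    have hper : g (e.symm (1, y)) = g (e.symm (0, y)) := by
      rw [hpath y 1, one_smul]
      have hk : (fun i => (((Pi.single j (1:ℤ) : Fin 3 → ℤ) i : ℤ) : ℝ)) = (Pi.single j 1 : V3) := by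
        funext i
        rcases eq_or_ne i j with rfl | hi
        · simp
        · simp [Pi.single_eq_of_ne hi, Pi.single_eq_of_ne (M := fun _ : Fin 3 => ℤ) hi]
      rw [← hk]
      exact hg.per (e.symm (0, y)) (Pi.single j (1:ℤ))
    rw [hper, sub_self]
  rw [show (fun y => ∫ t in Set.Ico (0:ℝ) 1, pdS j g (e.symm (t, y)))
    = fun _ => (0:ℝ) from funext hinner]
  simp

lemma setIntegral_cube_nonneg {u : V3 → ℝ} (hu : ∀ x, 0 ≤ u x) :
    0 ≤ ∫ x in cube, u x :=
  setIntegral_nonneg measurableSet_cube fun x _ => hu x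

lemma est {a u v : V3 → ℝ} (hac : Continuous a) (huc : Continuous u) (hvc : Continuous v)
    {A N : ℝ} (hA : ∀ x, |a x| ≤ A) (hU : ∫ x in cube, u x ^ 2 ≤ N)
    (hV : ∫ x in cube, v x ^ 2 ≤ N) :
    |∫ x in cube, a x * (u x * v x)| ≤ A * N := by
  have hA0 : 0 ≤ A := le_trans (abs_nonneg _) (hA 0)
  have hint : IntegrableOn (fun x => a x * (u x * v x)) cube :=
    integrableOn_cube (hac.mul (huc.mul hvc))
  have hint2 : IntegrableOn (fun x => A * (u x ^ 2 + v x ^ 2) / 2) cube :=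
    integrableOn_cube (by fun_prop)
  have h1 : |∫ x in cube, a x * (u x * v x)| ≤ ∫ x in cube, |a x * (u x * v x)| := by
    have := norm_integral_le_integral_norm (μ := volume.restrict cube)
      (fun x => a x * (u x * v x))
    simp only [Real.norm_eq_abs] at this
    exact this
  have h2 : ∫ x in cube, |a x * (u x * v x)| ≤ ∫ x in cube, A * (u x ^ 2 + v x ^ 2) / 2 := by
    refine setIntegral_mono_on hint.abs hint2 measurableSet_cube fun x _ => ?_
    have hb : |a x * (u x * v x)| = |a x| * (|u x| * |v x|) := by
      rw [abs_mul, abs_mul]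
    rw [hb]
    have huv : |u x| * |v x| ≤ (u x ^ 2 + v x ^ 2) / 2 := by nlinarith [sq_abs (u x), sq_abs (v x), sq_nonneg (|u x| - |v x|)]
    calc |a x| * (|u x| * |v x|) ≤ A * ((u x ^ 2 + v x ^ 2) / 2) := by
          refine mul_le_mul (hA x) huv (by positivity) hA0
      _ = A * (u x ^ 2 + v x ^ 2) / 2 := by ring
  have h3 : ∫ x in cube, A * (u x ^ 2 + v x ^ 2) / 2
      = A / 2 * ((∫ x in cube, u x ^ 2) + ∫ x in cube, v x ^ 2) := by
    rw [← MeasureTheory.integral_add (integrableOn_cube (by fun_prop))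
      (integrableOn_cube (by fun_prop)), ← MeasureTheory.integral_const_mul]
    refine setIntegral_congr_fun measurableSet_cube fun x _ => by ring
  have hN0 : 0 ≤ N := le_trans (setIntegral_cube_nonneg fun x => sq_nonneg (u x)) hU
  calc |∫ x in cube, a x * (u x * v x)| ≤ A / 2 * ((∫ x in cube, u x ^ 2) + ∫ x in cube, v x ^ 2) := by
        rw [← h3]; exact le_trans h1 h2
    _ ≤ A / 2 * (N + N) := by
        refine mul_le_mul_of_nonneg_left (add_le_add hU hV) (by positivity)
    _ = A * N := by ring

end Stmt9
namespace Stmt9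

lemma comp_smooth {F : VF} (hF : SmoothVF F) (i : Fin 3) :
    ContDiff ℝ (⊤ : ℕ∞) (fun y => F y i) := contDiff_pi.mp hF i

lemma pd_eq {F : VF} (hF : SmoothVF F) (j : Fin 3) :
    pd j F = fun x i => pdS j (fun y => F y i) x := by
  funext x
  show fderiv ℝ F x (Pi.single j 1) = _
  rw [show F = fun y i => (fun z => F z i) y from rfl,
    fderiv_pi fun i => ((comp_smooth hF i).differentiable h1top).differentiableAt]
  rfl

lemma pd_smooth {F : VF} (hF : SmoothVF F) (j : Fin 3) : SmoothVF (pd j F) := by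
  rw [pd_eq hF j]
  exact contDiff_pi.mpr fun i => pdS_smooth (comp_smooth hF i) j

lemma pd_iter_eq {F : VF} (hF : SmoothVF F) (j : Fin 3) (n : ℕ) :
    SmoothVF ((pd j)^[n] F) ∧
      ((pd j)^[n] F = fun x i => (pdS j)^[n] (fun y => F y i) x) := by
  induction n with
  | zero => exact ⟨hF, rfl⟩
  | succ n ih =>
    obtain ⟨hs, heq⟩ := ih
    constructor
    · rw [Function.iterate_succ_apply']
      exact pd_smooth hs j
    · rw [Function.iterate_succ_apply', pd_eq hs j]
      funext x
      funext i
      have : (fun y => (pd j)^[n] F y i) = (pdS j)^[n] (fun y => F y i) := by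
        rw [heq]
      simp only [this]
      rw [Function.iterate_succ_apply' (pdS j) n (fun y => F y i)]

lemma Dm_smooth {F : VF} (hF : SmoothVF F) (α : ℕ × ℕ × ℕ) : SmoothVF (Dm α F) :=
  (pd_iter_eq ((pd_iter_eq ((pd_iter_eq hF 2 α.2.2).1) 1 α.2.1).1) 0 α.1).1

lemma Dm_eq {F : VF} (hF : SmoothVF F) (α : ℕ × ℕ × ℕ) :
    Dm α F = fun x i => DmS α (fun y => F y i) x := by
  unfold Dm DmS
  have h2 := pd_iter_eq hF 2 α.2.2
  have h1 := pd_iter_eq h2.1 1 α.2.1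
  have h0 := pd_iter_eq h1.1 0 α.1
  rw [h0.2]
  funext x
  funext i
  congr 1
  have e1 : (fun y => (pd 1)^[α.2.1] ((pd 2)^[α.2.2] F) y i)
      = (pdS 1)^[α.2.1] (fun y => (pd 2)^[α.2.2] F y i) := by rw [h1.2]
  rw [e1]
  congr 1
  rw [h2.2]

lemma comp_nice {F : VF} (hFp : Periodic3 F) (hFs : SmoothVF F) (i : Fin 3) :
    Nice (fun y => F y i) :=
  ⟨comp_smooth hFs i, fun x k => congrFun (hFp x k) i⟩

lemma mem_midx {m : ℕ} {α : ℕ × ℕ × ℕ} : α ∈ midx m ↔ mdeg α ≤ m := by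
  obtain ⟨a, b, c⟩ := α
  rw [midx, Finset.mem_filter]
  simp only [Finset.mem_product, Finset.mem_range, mdeg]
  constructor
  · tauto
  · intro h
    refine ⟨⟨?_, ?_, ?_⟩, h⟩ <;> omega

lemma L2inner_eq {F G : VF} (hF : ∀ i : Fin 3, Continuous (fun y => F y i))
    (hG : ∀ i : Fin 3, Continuous (fun y => G y i)) :
    L2inner F G = ∑ i : Fin 3, ∫ x in cube, F x i * G x i := by
  unfold L2inner
  rw [integral_finset_sum]
  intro i _
  exact integrableOn_cube ((hF i).mul (hG i))

lemma bdd_norm_Dm {ξ : VF} (hp : Periodic3 ξ) (hs : SmoothVF ξ) (δ : ℕ × ℕ × ℕ) :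
    BddAbove (Set.range fun x => ‖Dm δ ξ x‖) := by
  have hb : ∀ i : Fin 3, ∃ M, ∀ x, |DmS δ (fun y => ξ y i) x| ≤ M :=
    fun i => ((comp_nice hp hs i).dm δ).bounded
  choose M hM using hb
  refine ⟨|M 0| + |M 1| + |M 2|, ?_⟩
  rintro r ⟨x, rfl⟩
  have hMn : ∀ i, |DmS δ (fun y => ξ y i) x| ≤ |M 0| + |M 1| + |M 2| := by
    intro i
    fin_cases i
    · exact le_trans (hM 0 x) (by nlinarith [abs_nonneg (M 1), abs_nonneg (M 2), le_abs_self (M 0)])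
    · exact le_trans (hM 1 x) (by nlinarith [abs_nonneg (M 0), abs_nonneg (M 2), le_abs_self (M 1)])
    · exact le_trans (hM 2 x) (by nlinarith [abs_nonneg (M 0), abs_nonneg (M 1), le_abs_self (M 2)])
  refine pi_norm_le_iff_of_nonneg (by positivity) |>.mpr fun i => ?_
  rw [Dm_eq hs δ, Real.norm_eq_abs]
  exact hMn i

lemma winf_nonneg (k : ℕ) (ξ : VF) (hp : Periodic3 ξ) (hs : SmoothVF ξ) :
    0 ≤ WinfNorm k ξ := by
  refine le_trans ?_ (Finset.le_sup' (fun α => ⨆ x, ‖Dm α ξ x‖) (midx_nonempty k).choose_spec)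
  refine le_ciSup_of_le (bdd_norm_Dm hp hs _) 0 (norm_nonneg _)

lemma winf_bound {ξ : VF} (hp : Periodic3 ξ) (hs : SmoothVF ξ) {k : ℕ} {δ : ℕ × ℕ × ℕ}
    (hδ : δ ∈ midx k) (j : Fin 3) (x : V3) :
    |DmS δ (fun y => ξ y j) x| ≤ WinfNorm k ξ := by
  have h1 : |DmS δ (fun y => ξ y j) x| ≤ ‖Dm δ ξ x‖ := by
    rw [Dm_eq hs δ]
    exact (Real.norm_eq_abs _) ▸ norm_le_pi_norm (fun i => DmS δ (fun y => ξ y i) x) j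
  refine le_trans h1 (le_trans (le_ciSup (bdd_norm_Dm hp hs δ) x) ?_)
  exact Finset.le_sup' (fun α => ⨆ x, ‖Dm α ξ x‖) hδ

lemma sob_nonneg_term {F : VF} (γ : ℕ × ℕ × ℕ) : 0 ≤ L2inner (Dm γ F) (Dm γ F) := by
  refine setIntegral_cube_nonneg fun x => ?_
  exact Finset.sum_nonneg fun i _ => mul_self_nonneg _

lemma sob_extract {F : VF} (hp : Periodic3 F) (hs : SmoothVF F) {m : ℕ} {γ : ℕ × ℕ × ℕ}
    (hγ : γ ∈ midx m) (i : Fin 3) :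
    ∫ x in cube, (DmS γ (fun y => F y i) x) ^ 2 ≤ sobNormSq m F := by
  have h2 : ∫ x in cube, (DmS γ (fun y => F y i) x) ^ 2 ≤ L2inner (Dm γ F) (Dm γ F) := by
    unfold L2inner
    refine setIntegral_mono_on (integrableOn_cube (by
      have := ((comp_nice hp hs i).dm γ).cont
      fun_prop)) (integrableOn_cube ?_) measurableSet_cube ?_
    · refine continuous_finset_sum _ fun l _ => ?_
      have hc : Continuous (fun y => Dm γ F y l) := by
        rw [Dm_eq hs γ]
        exact ((comp_nice hp hs l).dm γ).cont
      exact hc.mul hc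
    · intro x _
      have hcomp : ∀ l : Fin 3, Dm γ F x l = DmS γ (fun y => F y l) x :=
        fun l => congrFun (congrFun (Dm_eq hs γ) x) l
      calc (DmS γ (fun y => F y i) x) ^ 2 = Dm γ F x i * Dm γ F x i := by
            rw [hcomp i]; ring
        _ ≤ ∑ l : Fin 3, Dm γ F x l * Dm γ F x l :=
            Finset.single_le_sum (f := fun l => Dm γ F x l * Dm γ F x l)
              (fun l _ => mul_self_nonneg _) (Finset.mem_univ i)
  refine le_trans h2 ?_
  unfold sobNormSq sobInner
  exact Finset.single_le_sum (fun γ' _ => sob_nonneg_term γ') hγ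

lemma cancel {ξ : VF} (hp : Periodic3 ξ) (hs : SmoothVF ξ) (hdiv : DivFree ξ)
    {u v : V3 → ℝ} (hu : Nice u) (hv : Nice v) :
    ∑ j : Fin 3, ∫ x in cube, ξ x j * (pdS j u x * v x + u x * pdS j v x) = 0 := by
  have hxj : ∀ j : Fin 3, Nice (fun y => ξ y j) := fun j => comp_nice hp hs j
  have hsplit : ∀ j : Fin 3, ∫ x in cube, ξ x j * (pdS j u x * v x + u x * pdS j v x)
      = (∫ x in cube, pdS j (fun y => ξ y j * (u y * v y)) x)
        - ∫ x in cube, pdS j (fun y => ξ y j) x * (u x * v x) := by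
    intro j
    rw [← MeasureTheory.integral_sub
      (integrableOn_cube ((((hxj j).mul (hu.mul hv)).pd j).cont))
      (integrableOn_cube (((hxj j).pd j).cont.fun_mul (hu.cont.fun_mul hv.cont)))]
    refine setIntegral_congr_fun measurableSet_cube fun x _ => ?_
    have e1 := congrFun (pdS_mul (j := j) (hxj j) (hu.mul hv)) x
    have e2 := congrFun (pdS_mul (j := j) hu hv) x
    rw [e1, e2]
    ring
  rw [Finset.sum_congr rfl fun j _ => hsplit j, Finset.sum_sub_distrib]
  have hz1 : ∀ j : Fin 3, (∫ x in cube, pdS j (fun y => ξ y j * (u y * v y)) x) = 0 :=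
    fun j => integral_pdS_zero ((hxj j).mul (hu.mul hv)) j
  rw [Finset.sum_congr rfl fun j _ => hz1 j]
  simp only [Finset.sum_const, smul_zero, zero_sub, neg_eq_zero]
  rw [← MeasureTheory.integral_finset_sum]
  · have : ∀ x, ∑ j : Fin 3, pdS j (fun y => ξ y j) x * (u x * v x) = 0 := by
      intro x
      rw [← Finset.sum_mul]
      have hdd : ∑ j : Fin 3, pdS j (fun y => ξ y j) x = 0 := by
        have := hdiv x
        rw [Finset.sum_congr rfl (fun j _ => ?_)] at this
        · exact this
        · exact congrFun (congrFun (pd_eq hs j) x) j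
      rw [hdd, zero_mul]
    rw [setIntegral_congr_fun measurableSet_cube fun x _ => this x]
    simp
  · intro j _
    exact integrableOn_cube (((hxj j).pd j).cont.mul (hu.cont.mul hv.cont))

end Stmt9
namespace Stmt9

lemma DmS_zero (g : V3 → ℝ) : DmS (0,0,0) g = g := rfl

lemma msub_zero (γ : ℕ × ℕ × ℕ) : msub γ (0,0,0) = γ := by simp [msub]

lemma coef_zero (γ : ℕ × ℕ × ℕ) : coef γ (0,0,0) = 1 := by simp [coef]

lemma zero_mem_mbox (γ : ℕ × ℕ × ℕ) : ((0,0,0) : ℕ × ℕ × ℕ) ∈ mbox γ := by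
  rw [mem_mbox]; exact ⟨Nat.zero_le _, Nat.zero_le _, Nat.zero_le _⟩

lemma mdeg_pos_of_ne {δ : ℕ × ℕ × ℕ} (h : δ ≠ (0,0,0)) : 1 ≤ mdeg δ := by
  by_contra hc
  push_neg at hc
  apply h
  obtain ⟨a, b, c⟩ := δ
  simp only [mdeg] at hc
  have : a = 0 ∧ b = 0 ∧ c = 0 := by omega
  simp [this.1, this.2.1, this.2.2]

lemma mdeg_msub_add {γ δ : ℕ × ℕ × ℕ} (h : δ ∈ mbox γ) :
    mdeg (msub γ δ) + mdeg δ = mdeg γ := by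
  rw [mem_mbox] at h
  obtain ⟨a, b, c⟩ := γ; obtain ⟨a', b', c'⟩ := δ
  simp only [mdeg, msub] at *
  omega

lemma mbox_mem_midx {γ δ : ℕ × ℕ × ℕ} {m : ℕ} (hγ : mdeg γ ≤ m) (h : δ ∈ mbox γ) :
    δ ∈ midx m := by
  rw [mem_midx]
  have := mdeg_msub_add h
  omega

/-- generic bound for one integral term -/
lemma term_bound {ξ F : VF} (hp : Periodic3 ξ) (hs : SmoothVF ξ)
    (hfp : Periodic3 F) (hfs : SmoothVF F) {θ : ℕ} {δ ε ε' : ℕ × ℕ × ℕ}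
    (hδ : δ ∈ midx (θ+1)) (hε : ε ∈ midx θ) (hε' : ε' ∈ midx θ) (j a b : Fin 3) :
    |∫ x in cube, DmS δ (fun y => ξ y j) x *
        (DmS ε (fun y => F y a) x * DmS ε' (fun y => F y b) x)|
      ≤ WinfNorm (θ+1) ξ * sobNormSq θ F := by
  refine est (((comp_nice hp hs j).dm δ).cont) (((comp_nice hfp hfs a).dm ε).cont)
    (((comp_nice hfp hfs b).dm ε').cont) (fun x => winf_bound hp hs hδ j x)
    (sob_extract hfp hfs hε a) (sob_extract hfp hfs hε' b)

lemma sob_nonneg (m : ℕ) (F : VF) : 0 ≤ sobNormSq m F :=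
  Finset.sum_nonneg fun γ _ => sob_nonneg_term γ

end Stmt9
namespace Stmt9

lemma pdS_DmS_eadd {g : V3 → ℝ} (hg : Nice g) (j : Fin 3) (γ : ℕ × ℕ × ℕ) :
    pdS j (DmS γ g) = DmS (eadd γ j) g := by
  rw [pdS_comm_dm hg, DmS_pdS hg]

lemma Gexp {ξ f : VF} (hp : Periodic3 ξ) (hs : SmoothVF ξ)
    (hfp : Periodic3 f) (hfs : SmoothVF f) (γ γ' : ℕ × ℕ × ℕ) :
    L2inner (Dm γ (Bop ξ f)) (Dm γ' f)
      = (∑ i : Fin 3, ∑ j : Fin 3, ∫ x in cube,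
          ξ x j * (pdS j (DmS γ (fun y => f y i)) x * DmS γ' (fun y => f y i) x))
        + ((∑ i : Fin 3, ∑ j : Fin 3, ∑ δ ∈ mbox γ \ {((0,0,0) : ℕ × ℕ × ℕ)}, coef γ δ *
            ∫ x in cube, DmS δ (fun y => ξ y j) x *
              (DmS (eadd (msub γ δ) j) (fun y => f y i) x * DmS γ' (fun y => f y i) x))
          + ∑ i : Fin 3, ∑ j : Fin 3, ∑ δ ∈ mbox γ, coef γ δ *
            ∫ x in cube, DmS (eadd (msub γ δ) i) (fun y => ξ y j) x *
              (DmS δ (fun y => f y j) x * DmS γ' (fun y => f y i) x)) := by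
  classical
  have hfi : ∀ i : Fin 3, Nice (fun y => f y i) := fun i => comp_nice hfp hfs i
  have hxj : ∀ j : Fin 3, Nice (fun y => ξ y j) := fun j => comp_nice hp hs j
  have hB1 : ∀ i : Fin 3, Nice (fun y => ∑ j : Fin 3, ξ y j * pdS j (fun z => f z i) y) :=
    fun i => Nice.sum (Finset.univ : Finset (Fin 3)) _ (fun j _ => (hxj j).mul ((hfi i).pd j))
  have hB2 : ∀ i : Fin 3, Nice (fun y => ∑ j : Fin 3, f y j * pdS i (fun z => ξ z j) y) :=
    fun i => Nice.sum (Finset.univ : Finset (Fin 3)) _ (fun j _ => (hfi j).mul ((hxj j).pd i))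
  have hBcomp : ∀ i : Fin 3, (fun y => Bop ξ f y i)
      = fun y => (∑ j : Fin 3, ξ y j * pdS j (fun z => f z i) y)
        + ∑ j : Fin 3, f y j * pdS i (fun z => ξ z j) y := by
    intro i
    funext y
    show transport ξ f y i + stretch ξ f y i = _
    unfold transport stretch
    simp only [Finset.sum_apply, Pi.smul_apply, smul_eq_mul]
    congr 1
    · exact Finset.sum_congr rfl fun j _ => by rw [congrFun (congrFun (pd_eq hfs j) y) i]
    · exact Finset.sum_congr rfl fun j _ => by rw [congrFun (congrFun (pd_eq hs i) y) j]
  have hBNice : ∀ i : Fin 3, Nice (fun y => Bop ξ f y i) := by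
    intro i
    rw [hBcomp i]
    exact (hB1 i).add (hB2 i)
  have hBopSmooth : SmoothVF (Bop ξ f) := contDiff_pi.mpr fun i => (hBNice i).smooth
  -- Step 1: split L2 inner product into components
  have hL : L2inner (Dm γ (Bop ξ f)) (Dm γ' f) = ∑ i : Fin 3,
      ∫ x in cube, DmS γ (fun y => Bop ξ f y i) x * DmS γ' (fun y => f y i) x := by
    rw [L2inner_eq (fun i => by
        rw [show (fun y => Dm γ (Bop ξ f) y i) = DmS γ (fun y => Bop ξ f y i) from
          funext fun y => congrFun (congrFun (Dm_eq hBopSmooth γ) y) i]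
        exact ((hBNice i).dm γ).cont)
      (fun i => by
        rw [show (fun y => Dm γ' f y i) = DmS γ' (fun y => f y i) from
          funext fun y => congrFun (congrFun (Dm_eq hfs γ') y) i]
        exact ((hfi i).dm γ').cont)]
    refine Finset.sum_congr rfl fun i _ => setIntegral_congr_fun measurableSet_cube
      fun x _ => ?_
    rw [congrFun (congrFun (Dm_eq hBopSmooth γ) x) i, congrFun (congrFun (Dm_eq hfs γ') x) i]
  -- Step 2: pointwise expansion of DmS γ (B-component)
  have hexp : ∀ (i : Fin 3) (x : V3), DmS γ (fun y => Bop ξ f y i) x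
      = (∑ j : Fin 3, ∑ δ ∈ mbox γ, coef γ δ *
          (DmS δ (fun y => ξ y j) x * DmS (eadd (msub γ δ) j) (fun y => f y i) x))
        + ∑ j : Fin 3, ∑ δ ∈ mbox γ, coef γ δ *
          (DmS δ (fun y => f y j) x * DmS (eadd (msub γ δ) i) (fun y => ξ y j) x) := by
    intro i x
    have e1 : DmS γ (fun y => ∑ j : Fin 3, ξ y j * pdS j (fun z => f z i) y) x
        = ∑ j : Fin 3, ∑ δ ∈ mbox γ, coef γ δ *
            (DmS δ (fun y => ξ y j) x * DmS (eadd (msub γ δ) j) (fun y => f y i) x) := by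
      rw [DmS_sum (Finset.univ : Finset (Fin 3))
        (fun j => fun y => ξ y j * pdS j (fun z => f z i) y)
        (fun j _ => (hxj j).mul ((hfi i).pd j)) γ]
      refine Finset.sum_congr rfl fun j _ => ?_
      rw [leibniz3 (hxj j) ((hfi i).pd j) γ]
      refine Finset.sum_congr rfl fun δ _ => ?_
      rw [DmS_pdS (hfi i) j (msub γ δ)]
    have e2 : DmS γ (fun y => ∑ j : Fin 3, f y j * pdS i (fun z => ξ z j) y) x
        = ∑ j : Fin 3, ∑ δ ∈ mbox γ, coef γ δ *
            (DmS δ (fun y => f y j) x * DmS (eadd (msub γ δ) i) (fun y => ξ y j) x) := by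
      rw [DmS_sum (Finset.univ : Finset (Fin 3))
        (fun j => fun y => f y j * pdS i (fun z => ξ z j) y)
        (fun j _ => (hfi j).mul ((hxj j).pd i)) γ]
      refine Finset.sum_congr rfl fun j _ => ?_
      rw [leibniz3 (hfi j) ((hxj j).pd i) γ]
      refine Finset.sum_congr rfl fun δ _ => ?_
      rw [DmS_pdS (hxj j) i (msub γ δ)]
    rw [hBcomp i, DmS_add (hB1 i) (hB2 i)]
    exact congrArg₂ (fun a b : ℝ => a + b) e1 e2
  -- continuity helpers
  have hcx : ∀ (ε : ℕ × ℕ × ℕ) (j : Fin 3), Continuous (DmS ε (fun y => ξ y j)) :=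
    fun ε j => ((hxj j).dm ε).cont
  have hcf : ∀ (ε : ℕ × ℕ × ℕ) (i : Fin 3), Continuous (DmS ε (fun y => f y i)) :=
    fun ε i => ((hfi i).dm ε).cont
  -- Step 3: per-component integral expansion
  have hIntExp : ∀ i : Fin 3,
      ∫ x in cube, DmS γ (fun y => Bop ξ f y i) x * DmS γ' (fun y => f y i) x
      = (∑ j : Fin 3, ∑ δ ∈ mbox γ, coef γ δ *
          ∫ x in cube, DmS δ (fun y => ξ y j) x *
            (DmS (eadd (msub γ δ) j) (fun y => f y i) x * DmS γ' (fun y => f y i) x))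
        + ∑ j : Fin 3, ∑ δ ∈ mbox γ, coef γ δ *
          ∫ x in cube, DmS (eadd (msub γ δ) i) (fun y => ξ y j) x *
            (DmS δ (fun y => f y j) x * DmS γ' (fun y => f y i) x) := by
    intro i
    have hpt : ∀ x, DmS γ (fun y => Bop ξ f y i) x * DmS γ' (fun y => f y i) x
        = (∑ j : Fin 3, ∑ δ ∈ mbox γ, coef γ δ *
            (DmS δ (fun y => ξ y j) x *
              (DmS (eadd (msub γ δ) j) (fun y => f y i) x * DmS γ' (fun y => f y i) x)))
          + ∑ j : Fin 3, ∑ δ ∈ mbox γ, coef γ δ *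
            (DmS (eadd (msub γ δ) i) (fun y => ξ y j) x *
              (DmS δ (fun y => f y j) x * DmS γ' (fun y => f y i) x)) := by
      intro x
      rw [hexp i x, add_mul]
      simp only [Finset.sum_mul]
      congr 1
      · exact Finset.sum_congr rfl fun j _ => Finset.sum_congr rfl fun δ _ => by ring
      · exact Finset.sum_congr rfl fun j _ => Finset.sum_congr rfl fun δ _ => by ring
    rw [setIntegral_congr_fun measurableSet_cube (fun x _ => hpt x)]
    rw [MeasureTheory.integral_add
      (integrableOn_cube (continuous_finset_sum _ fun j _ => continuous_finset_sum _
        fun δ _ => continuous_const.fun_mul ((hcx δ j).fun_mul (((hcf _ i)).fun_mul (hcf γ' i)))))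
      (integrableOn_cube (continuous_finset_sum _ fun j _ => continuous_finset_sum _
        fun δ _ => continuous_const.fun_mul ((hcx _ j).fun_mul (((hcf δ j)).fun_mul (hcf γ' i)))))]
    congr 1
    · rw [MeasureTheory.integral_finset_sum _ (fun j _ => integrableOn_cube
        (continuous_finset_sum _ fun δ _ =>
          continuous_const.fun_mul ((hcx δ j).fun_mul (((hcf _ i)).fun_mul (hcf γ' i)))))]
      refine Finset.sum_congr rfl fun j _ => ?_
      rw [MeasureTheory.integral_finset_sum _ (fun δ _ => integrableOn_cube
        (continuous_const.fun_mul ((hcx δ j).fun_mul (((hcf _ i)).fun_mul (hcf γ' i)))))]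
      exact Finset.sum_congr rfl fun δ _ => MeasureTheory.integral_const_mul _ _
    · rw [MeasureTheory.integral_finset_sum _ (fun j _ => integrableOn_cube
        (continuous_finset_sum _ fun δ _ =>
          continuous_const.fun_mul ((hcx _ j).fun_mul (((hcf δ j)).fun_mul (hcf γ' i)))))]
      refine Finset.sum_congr rfl fun j _ => ?_
      rw [MeasureTheory.integral_finset_sum _ (fun δ _ => integrableOn_cube
        (continuous_const.fun_mul ((hcx _ j).fun_mul (((hcf δ j)).fun_mul (hcf γ' i)))))]
      exact Finset.sum_congr rfl fun δ _ => MeasureTheory.integral_const_mul _ _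
  -- Step 4: split off the δ = 0 term of the transport part
  rw [hL, Finset.sum_congr rfl fun i _ => hIntExp i, Finset.sum_add_distrib]
  have hsplit : ∀ (i j : Fin 3),
      (∑ δ ∈ mbox γ, coef γ δ *
        ∫ x in cube, DmS δ (fun y => ξ y j) x *
          (DmS (eadd (msub γ δ) j) (fun y => f y i) x * DmS γ' (fun y => f y i) x))
      = (∫ x in cube,
          ξ x j * (pdS j (DmS γ (fun y => f y i)) x * DmS γ' (fun y => f y i) x))
        + ∑ δ ∈ mbox γ \ {((0,0,0) : ℕ × ℕ × ℕ)}, coef γ δ *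
          ∫ x in cube, DmS δ (fun y => ξ y j) x *
            (DmS (eadd (msub γ δ) j) (fun y => f y i) x * DmS γ' (fun y => f y i) x) := by
    intro i j
    rw [Finset.sum_eq_sum_sdiff_singleton_add (zero_mem_mbox γ)
      (fun δ => coef γ δ * ∫ x in cube, DmS δ (fun y => ξ y j) x *
        (DmS (eadd (msub γ δ) j) (fun y => f y i) x * DmS γ' (fun y => f y i) x))]
    rw [coef_zero, one_mul, msub_zero, DmS_zero, ← pdS_DmS_eadd (hfi i) j γ]
    ring
  have htr : (∑ i : Fin 3, ∑ j : Fin 3, ∑ δ ∈ mbox γ, coef γ δ *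
      ∫ x in cube, DmS δ (fun y => ξ y j) x *
        (DmS (eadd (msub γ δ) j) (fun y => f y i) x * DmS γ' (fun y => f y i) x))
      = (∑ i : Fin 3, ∑ j : Fin 3, ∫ x in cube,
          ξ x j * (pdS j (DmS γ (fun y => f y i)) x * DmS γ' (fun y => f y i) x))
        + ∑ i : Fin 3, ∑ j : Fin 3, ∑ δ ∈ mbox γ \ {((0,0,0) : ℕ × ℕ × ℕ)}, coef γ δ *
          ∫ x in cube, DmS δ (fun y => ξ y j) x *
            (DmS (eadd (msub γ δ) j) (fun y => f y i) x * DmS γ' (fun y => f y i) x) := by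
    rw [Finset.sum_congr rfl fun i _ => Finset.sum_congr rfl fun j _ => hsplit i j]
    rw [Finset.sum_congr rfl fun i (_ : i ∈ Finset.univ) => Finset.sum_add_distrib,
      Finset.sum_add_distrib]
  rw [htr, add_assoc]

end Stmt9
namespace Stmt9

lemma sum9 (c : ℝ) : (∑ _i : Fin 3, ∑ _j : Fin 3, c) = 9 * c := by
  simp only [Finset.sum_const, Finset.card_univ, Fintype.card_fin, smul_eq_mul, Nat.cast_ofNat]
  ring

lemma rest_bound {ξ f : VF} (hp : Periodic3 ξ) (hs : SmoothVF ξ)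
    (hfp : Periodic3 f) (hfs : SmoothVF f) {θ : ℕ} (γ γ' : ℕ × ℕ × ℕ)
    (hγ : mdeg γ ≤ θ) (hγ' : mdeg γ' ≤ θ) :
    |(∑ i : Fin 3, ∑ j : Fin 3, ∑ δ ∈ mbox γ \ {((0,0,0) : ℕ × ℕ × ℕ)}, coef γ δ *
        ∫ x in cube, DmS δ (fun y => ξ y j) x *
          (DmS (eadd (msub γ δ) j) (fun y => f y i) x * DmS γ' (fun y => f y i) x))
      + ∑ i : Fin 3, ∑ j : Fin 3, ∑ δ ∈ mbox γ, coef γ δ *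
        ∫ x in cube, DmS (eadd (msub γ δ) i) (fun y => ξ y j) x *
          (DmS δ (fun y => f y j) x * DmS γ' (fun y => f y i) x)|
    ≤ 18 * (∑ δ ∈ mbox γ, coef γ δ) * (WinfNorm (θ+1) ξ * sobNormSq θ f) := by
  have hWN : 0 ≤ WinfNorm (θ+1) ξ * sobNormSq θ f :=
    mul_nonneg (winf_nonneg _ _ hp hs) (sob_nonneg _ _)
  have hγ'm : γ' ∈ midx θ := mem_midx.mpr hγ'
  have hbound1 : ∀ (i j : Fin 3),
      |∑ δ ∈ mbox γ \ {((0,0,0) : ℕ × ℕ × ℕ)}, coef γ δ *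
        ∫ x in cube, DmS δ (fun y => ξ y j) x *
          (DmS (eadd (msub γ δ) j) (fun y => f y i) x * DmS γ' (fun y => f y i) x)|
      ≤ (∑ δ ∈ mbox γ, coef γ δ) * (WinfNorm (θ+1) ξ * sobNormSq θ f) := by
    intro i j
    refine le_trans (Finset.abs_sum_le_sum_abs _ _) ?_
    refine le_trans (Finset.sum_le_sum (f := fun δ => |coef γ δ *
      ∫ x in cube, DmS δ (fun y => ξ y j) x *
        (DmS (eadd (msub γ δ) j) (fun y => f y i) x * DmS γ' (fun y => f y i) x)|)
      (g := fun δ => coef γ δ * (WinfNorm (θ+1) ξ * sobNormSq θ f)) fun δ hδ => ?_) ?_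
    · obtain ⟨hδm, hδne⟩ := Finset.mem_sdiff.mp hδ
      rw [Finset.mem_singleton] at hδne
      beta_reduce
      rw [abs_mul, abs_of_nonneg (coef_nonneg γ δ)]
      refine mul_le_mul_of_nonneg_left ?_ (coef_nonneg γ δ)
      refine term_bound hp hs hfp hfs ?_ ?_ hγ'm j i i
      · exact mem_midx.mpr (le_trans (le_trans (by
          have := mdeg_msub_add hδm; omega) hγ) (Nat.le_succ θ))
      · rw [mem_midx, mdeg_eadd]
        have h1 := mdeg_msub_add hδm
        have h2 := mdeg_pos_of_ne hδne
        omega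
    · refine le_trans (Finset.sum_le_sum_of_subset_of_nonneg Finset.sdiff_subset
        (fun δ _ _ => mul_nonneg (coef_nonneg γ δ) hWN)) ?_
      exact le_of_eq (Finset.sum_mul _ _ _).symm
  have hbound2 : ∀ (i j : Fin 3),
      |∑ δ ∈ mbox γ, coef γ δ *
        ∫ x in cube, DmS (eadd (msub γ δ) i) (fun y => ξ y j) x *
          (DmS δ (fun y => f y j) x * DmS γ' (fun y => f y i) x)|
      ≤ (∑ δ ∈ mbox γ, coef γ δ) * (WinfNorm (θ+1) ξ * sobNormSq θ f) := by
    intro i j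
    refine le_trans (Finset.abs_sum_le_sum_abs _ _) ?_
    rw [Finset.sum_mul]
    refine Finset.sum_le_sum fun δ hδ => ?_
    rw [abs_mul, abs_of_nonneg (coef_nonneg γ δ)]
    refine mul_le_mul_of_nonneg_left ?_ (coef_nonneg γ δ)
    refine term_bound hp hs hfp hfs ?_ ?_ hγ'm j j i
    · rw [mem_midx, mdeg_eadd]
      have h1 := mdeg_msub_add hδ
      omega
    · exact mem_midx.mpr (le_trans (by have := mdeg_msub_add hδ; omega) hγ)
  refine le_trans (abs_add_le _ _) ?_
  have h1 : |∑ i : Fin 3, ∑ j : Fin 3, ∑ δ ∈ mbox γ \ {((0,0,0) : ℕ × ℕ × ℕ)}, coef γ δ *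
      ∫ x in cube, DmS δ (fun y => ξ y j) x *
        (DmS (eadd (msub γ δ) j) (fun y => f y i) x * DmS γ' (fun y => f y i) x)|
      ≤ 9 * ((∑ δ ∈ mbox γ, coef γ δ) * (WinfNorm (θ+1) ξ * sobNormSq θ f)) := by
    rw [← sum9 ((∑ δ ∈ mbox γ, coef γ δ) * (WinfNorm (θ+1) ξ * sobNormSq θ f))]
    refine le_trans (Finset.abs_sum_le_sum_abs _ _) (Finset.sum_le_sum fun i _ => ?_)
    exact le_trans (Finset.abs_sum_le_sum_abs _ _) (Finset.sum_le_sum fun j _ => hbound1 i j)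
  have h2 : |∑ i : Fin 3, ∑ j : Fin 3, ∑ δ ∈ mbox γ, coef γ δ *
      ∫ x in cube, DmS (eadd (msub γ δ) i) (fun y => ξ y j) x *
        (DmS δ (fun y => f y j) x * DmS γ' (fun y => f y i) x)|
      ≤ 9 * ((∑ δ ∈ mbox γ, coef γ δ) * (WinfNorm (θ+1) ξ * sobNormSq θ f)) := by
    rw [← sum9 ((∑ δ ∈ mbox γ, coef γ δ) * (WinfNorm (θ+1) ξ * sobNormSq θ f))]
    refine le_trans (Finset.abs_sum_le_sum_abs _ _) (Finset.sum_le_sum fun i _ => ?_)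
    exact le_trans (Finset.abs_sum_le_sum_abs _ _) (Finset.sum_le_sum fun j _ => hbound2 i j)
  calc |_| + |_| ≤ 9 * ((∑ δ ∈ mbox γ, coef γ δ) * (WinfNorm (θ+1) ξ * sobNormSq θ f))
        + 9 * ((∑ δ ∈ mbox γ, coef γ δ) * (WinfNorm (θ+1) ξ * sobNormSq θ f)) := add_le_add h1 h2
    _ = 18 * (∑ δ ∈ mbox γ, coef γ δ) * (WinfNorm (θ+1) ξ * sobNormSq θ f) := by ring

lemma cancel2 {ξ f : VF} (hp : Periodic3 ξ) (hs : SmoothVF ξ) (hdiv : DivFree ξ)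
    (hfp : Periodic3 f) (hfs : SmoothVF f) (γ γ' : ℕ × ℕ × ℕ) :
    (∑ i : Fin 3, ∑ j : Fin 3, ∫ x in cube,
      ξ x j * (pdS j (DmS γ (fun y => f y i)) x * DmS γ' (fun y => f y i) x))
    + (∑ i : Fin 3, ∑ j : Fin 3, ∫ x in cube,
      ξ x j * (pdS j (DmS γ' (fun y => f y i)) x * DmS γ (fun y => f y i) x)) = 0 := by
  have hfi : ∀ i : Fin 3, Nice (fun y => f y i) := fun i => comp_nice hfp hfs i
  have hxj : ∀ j : Fin 3, Nice (fun y => ξ y j) := fun j => comp_nice hp hs j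
  rw [← Finset.sum_add_distrib]
  refine Finset.sum_eq_zero fun i _ => ?_
  rw [← Finset.sum_add_distrib]
  have hu : Nice (DmS γ (fun y => f y i)) := (hfi i).dm γ
  have hv : Nice (DmS γ' (fun y => f y i)) := (hfi i).dm γ'
  have hc := cancel hp hs hdiv hu hv
  rw [← hc]
  refine Finset.sum_congr rfl fun j _ => ?_
  rw [← MeasureTheory.integral_add
    (integrableOn_cube ((hxj j).cont.fun_mul (((hu.pd j).cont).fun_mul hv.cont)))
    (integrableOn_cube ((hxj j).cont.fun_mul (((hv.pd j).cont).fun_mul hu.cont)))]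
  exact setIntegral_congr_fun measurableSet_cube fun x _ => by ring

end Stmt9

namespace Stmt9

lemma key_combine {c1 c2 r1 r2 B1 B2 : ℝ} (hc : c1 + c2 = 0)
    (h1 : |r1| ≤ B1) (h2 : |r2| ≤ B2) : |(c1 + r1) + (c2 + r2)| ≤ B1 + B2 := by
  have he : (c1 + r1) + (c2 + r2) = r1 + r2 := by linarith
  rw [he]
  exact (abs_add_le _ _).trans (add_le_add h1 h2)

end Stmt9

/-- Lemma 2.2, second inequality. -/
theorem stmt9 (α β : ℕ × ℕ × ℕ) :
    ∃ C : ℝ, ∀ ξ f : VF, GoodField ξ → Periodic3 f → SmoothVF f →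
      (L2inner (Dm α (Bop ξ f)) (Dm β f) + L2inner (Dm β (Bop ξ f)) (Dm α f)) ^ 2 ≤
      C * WinfNorm (max (mdeg α) (mdeg β) + 1) ξ ^ 2
        * (sobNormSq (max (mdeg α) (mdeg β)) f) ^ 2 := by
  classical
  refine ⟨(18 * (∑ δ ∈ Stmt9.mbox α, Stmt9.coef α δ)
    + 18 * (∑ δ ∈ Stmt9.mbox β, Stmt9.coef β δ))^2, ?_⟩
  intro ξ f hG hfp hfs
  obtain ⟨hp, hs, hdiv, -⟩ := hG
  have hα : mdeg α ≤ max (mdeg α) (mdeg β) := le_max_left _ _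
  have hβ : mdeg β ≤ max (mdeg α) (mdeg β) := le_max_right _ _
  have hA := Stmt9.Gexp hp hs hfp hfs α β
  have hB := Stmt9.Gexp hp hs hfp hfs β α
  have hC := Stmt9.cancel2 hp hs hdiv hfp hfs α β
  have habs : |L2inner (Dm α (Bop ξ f)) (Dm β f) + L2inner (Dm β (Bop ξ f)) (Dm α f)|
      ≤ 18 * (∑ δ ∈ Stmt9.mbox α, Stmt9.coef α δ) *
          (WinfNorm (max (mdeg α) (mdeg β) + 1) ξ * sobNormSq (max (mdeg α) (mdeg β)) f)
        + 18 * (∑ δ ∈ Stmt9.mbox β, Stmt9.coef β δ) *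
          (WinfNorm (max (mdeg α) (mdeg β) + 1) ξ * sobNormSq (max (mdeg α) (mdeg β)) f) := by
    rw [hA, hB]
    exact Stmt9.key_combine hC
      (Stmt9.rest_bound hp hs hfp hfs α β hα hβ)
      (Stmt9.rest_bound hp hs hfp hfs β α hβ hα)
  have habs' : |L2inner (Dm α (Bop ξ f)) (Dm β f) + L2inner (Dm β (Bop ξ f)) (Dm α f)|
      ≤ (18 * (∑ δ ∈ Stmt9.mbox α, Stmt9.coef α δ)
          + 18 * (∑ δ ∈ Stmt9.mbox β, Stmt9.coef β δ)) *
        (WinfNorm (max (mdeg α) (mdeg β) + 1) ξ * sobNormSq (max (mdeg α) (mdeg β)) f) :=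
    le_of_le_of_eq habs (by ring)
  calc (L2inner (Dm α (Bop ξ f)) (Dm β f) + L2inner (Dm β (Bop ξ f)) (Dm α f)) ^ 2
      = |L2inner (Dm α (Bop ξ f)) (Dm β f) + L2inner (Dm β (Bop ξ f)) (Dm α f)| ^ 2 :=
        (sq_abs _).symm
    _ ≤ ((18 * (∑ δ ∈ Stmt9.mbox α, Stmt9.coef α δ)
          + 18 * (∑ δ ∈ Stmt9.mbox β, Stmt9.coef β δ)) *
        (WinfNorm (max (mdeg α) (mdeg β) + 1) ξ * sobNormSq (max (mdeg α) (mdeg β)) f)) ^ 2 :=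
        pow_le_pow_left₀ (abs_nonneg _) habs' 2
    _ = (18 * (∑ δ ∈ Stmt9.mbox α, Stmt9.coef α δ)
          + 18 * (∑ δ ∈ Stmt9.mbox β, Stmt9.coef β δ))^2
        * WinfNorm (max (mdeg α) (mdeg β) + 1) ξ ^ 2
        * (sobNormSq (max (mdeg α) (mdeg β)) f) ^ 2 := by ring
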